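/- Let A₁,…,Aₙ, B₁,…,Bₙ be bounded operators on a complex Hilbert space and α : Fin n × Fin n → ℂ with conj(α(i,j))·α(j,i) = 1 for all i,j. Then |∑ᵢ (Aᵢ − Bᵢ)|² ≤ ∑_{i,j} |α(i,j)Aᵢ − α(j,i)Bⱼ|² in the Loewner order. -/

import Mathlib

open ContinuousLinearMap

theorem generalized_operator_bohr_inequality
    {E : Type*} [NormedAddCommGroup E] [InnerProductSpace ℂ E] [CompleteSpace E]
    {n : ℕ} (A B : Fin n → (E →L[ℂ] E)) (α : Fin n × Fin n → ℂ)
    (hα : ∀ i j, (starRingEnd ℂ) (α (i, j)) * α (j, i) = 1) :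
    ((∑ i, ∑ j, adjoint (α (i, j) • A i - α (j, i) • B j) * (α (i, j) • A i - α (j, i) • B j))
      - adjoint (∑ i, (A i - B i)) * (∑ i, (A i - B i))).IsPositive := by
  classical
  simp only [← star_eq_adjoint]
  -- per-term expansion
  have key : ∀ (X Y : Fin n → (E →L[ℂ] E)) (i j : Fin n),
      star (α (i, j) • X i - α (j, i) • Y j) * (α (i, j) • X i - α (j, i) • Y j)
        = (starRingEnd ℂ (α (i, j)) * α (i, j)) • (star (X i) * X i)
          + (starRingEnd ℂ (α (j, i)) * α (j, i)) • (star (Y j) * Y j)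
          - star (X i) * Y j - star (Y j) * X i := by
    intro X Y i j
    have h1 := hα i j
    have h2 := hα j i
    simp only [star_sub, star_smul, sub_mul, mul_sub, smul_mul_assoc, mul_smul_comm, smul_smul,
      RCLike.star_def]
    match_scalars <;>
      first | ring1 | linear_combination h1 | linear_combination h2 |
        linear_combination -h1 | linear_combination -h2
  -- aggregates
  have hT : (∑ i, ∑ j, star (α (i, j) • A i - α (j, i) • B j) * (α (i, j) • A i - α (j, i) • B j))
      = (∑ i, ∑ j, (starRingEnd ℂ (α (i, j)) * α (i, j)) • (star (A i) * A i))
        + (∑ i, ∑ j, (starRingEnd ℂ (α (i, j)) * α (i, j)) • (star (B i) * B i))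
        - (∑ i, ∑ j, star (A i) * B j) - (∑ i, ∑ j, star (B i) * A j) := by
    simp_rw [key A B]
    simp only [Finset.sum_sub_distrib, Finset.sum_add_distrib]
    rw [show (∑ i : Fin n, ∑ j : Fin n, (starRingEnd ℂ (α (j, i)) * α (j, i)) • (star (B j) * B j))
        = ∑ i : Fin n, ∑ j : Fin n, (starRingEnd ℂ (α (i, j)) * α (i, j)) • (star (B i) * B i)
      from Finset.sum_comm]
    rw [show (∑ i : Fin n, ∑ j : Fin n, star (B j) * A i)
        = ∑ i : Fin n, ∑ j : Fin n, star (B i) * A j from Finset.sum_comm]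
  have hS : star (∑ i, (A i - B i)) * (∑ i, (A i - B i))
      = (∑ i, ∑ j, star (A i) * A j) - (∑ i, ∑ j, star (A i) * B j)
        - (∑ i, ∑ j, star (B i) * A j) + (∑ i, ∑ j, star (B i) * B j) := by
    rw [star_sum, Finset.sum_mul]
    simp_rw [Finset.mul_sum]
    simp only [star_sub, sub_mul, mul_sub, Finset.sum_sub_distrib, Finset.sum_add_distrib]
    abel
  have diag : ∀ (X : Fin n → (E →L[ℂ] E)),
      (∑ i, ∑ j, star (α (i, j) • X i - α (j, i) • X j) * (α (i, j) • X i - α (j, i) • X j))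
        = ((∑ i, ∑ j, (starRingEnd ℂ (α (i, j)) * α (i, j)) • (star (X i) * X i))
            - (∑ i, ∑ j, star (X i) * X j))
          + ((∑ i, ∑ j, (starRingEnd ℂ (α (i, j)) * α (i, j)) • (star (X i) * X i))
            - (∑ i, ∑ j, star (X i) * X j)) := by
    intro X
    simp_rw [key X X]
    simp only [Finset.sum_sub_distrib, Finset.sum_add_distrib]
    rw [show (∑ i : Fin n, ∑ j : Fin n, (starRingEnd ℂ (α (j, i)) * α (j, i)) • (star (X j) * X j))
        = ∑ i : Fin n, ∑ j : Fin n, (starRingEnd ℂ (α (i, j)) * α (i, j)) • (star (X i) * X i)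
      from Finset.sum_comm]
    rw [show (∑ i : Fin n, ∑ j : Fin n, star (X j) * X i)
        = ∑ i : Fin n, ∑ j : Fin n, star (X i) * X j from Finset.sum_comm]
    abel
  -- the positive witness
  have hP : ((∑ i, ∑ j, star (α (i, j) • A i - α (j, i) • A j) * (α (i, j) • A i - α (j, i) • A j))
      + (∑ i, ∑ j, star (α (i, j) • B i - α (j, i) • B j) * (α (i, j) • B i - α (j, i) • B j))).IsPositive := by
    have pos : ∀ S : E →L[ℂ] E, (star S * S).IsPositive := by
      intro S
      have := isPositive_one.adjoint_conj (𝕜 := ℂ) S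
      simpa [mul_def, star_eq_adjoint, one_def] using this
    have sumpos : ∀ (f : Fin n → Fin n → (E →L[ℂ] E)),
        (∑ i, ∑ j, star (f i j) * f i j).IsPositive := by
      intro f
      refine Finset.sum_induction _ _ (fun a b ha hb => ha.add hb) isPositive_zero (fun i _ => ?_)
      exact Finset.sum_induction _ _ (fun a b ha hb => ha.add hb) isPositive_zero
        (fun j _ => pos (f i j))
    exact (sumpos (fun i j => α (i, j) • A i - α (j, i) • A j)).add
      (sumpos (fun i j => α (i, j) • B i - α (j, i) • B j))
  -- D + D = P
  have hDD :
      ((∑ i, ∑ j, star (α (i, j) • A i - α (j, i) • B j) * (α (i, j) • A i - α (j, i) • B j))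
        - star (∑ i, (A i - B i)) * (∑ i, (A i - B i)))
      + ((∑ i, ∑ j, star (α (i, j) • A i - α (j, i) • B j) * (α (i, j) • A i - α (j, i) • B j))
        - star (∑ i, (A i - B i)) * (∑ i, (A i - B i)))
      = (∑ i, ∑ j, star (α (i, j) • A i - α (j, i) • A j) * (α (i, j) • A i - α (j, i) • A j))
        + (∑ i, ∑ j, star (α (i, j) • B i - α (j, i) • B j) * (α (i, j) • B i - α (j, i) • B j)) := by
    rw [hT, hS, diag A, diag B]
    abel
  -- conclude
  set D := (∑ i, ∑ j, star (α (i, j) • A i - α (j, i) • B j) * (α (i, j) • A i - α (j, i) • B j))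
      - star (∑ i, (A i - B i)) * (∑ i, (A i - B i)) with hD
  constructor
  · -- self-adjoint
    have : IsSelfAdjoint (D + D) := hDD ▸ hP.isSelfAdjoint
    have h2 : star D + star D = D + D := by
      have := this
      rwa [IsSelfAdjoint, star_add] at this
    have h3 : (2 : ℂ) • star D = (2 : ℂ) • D := by
      rw [two_smul, two_smul]; exact_mod_cast h2
    exact isSelfAdjoint_iff_isSymmetric.mp (smul_right_injective _ (two_ne_zero) h3)
  · intro x
    have hp := hP.2 x
    rw [← hDD] at hp
    have : (D + D).reApplyInnerSelf x = D.reApplyInnerSelf x + D.reApplyInnerSelf x := by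
      simp [reApplyInnerSelf, inner_add_left]
    rw [this] at hp
    linarith
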